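/- Let G be a finite group, H a normal subgroup of G of index 2, and b ∈ G \ H. Let M be the set of class functions on H of the form χ − ᵇχ, where χ ranges over all ℤ-linear combinations of characters of finite-dimensional complex representations of H (i.e. over all virtual characters of H). Then M is a free abelian group, and a ℤ-basis of M is given by the functions χ − ᵇχ, where χ ranges over a set of representatives of the two-element G-orbits in the set of irreducible characters of H (one representative chosen from each orbit {χ, ᵇχ} with ᵇχ ≠ χ). -/

import Mathlib

open CategoryTheory

/-- The conjugate `ᵍχ` of a function `χ : H → ℂ` on a normal subgroup `H` of `G`
by an element `g ∈ G`, defined by `ᵍχ(h) = χ(g⁻¹ h g)`. -/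
def conjFun {G : Type*} [Group G] (H : Subgroup G) [hN : H.Normal] (g : G)
    (χ : ↥H → ℂ) : ↥H → ℂ :=
  fun h => χ ⟨g⁻¹ * ↑h * g, hN.conj_mem' ↑h h.2 g⟩

/-- The set of virtual characters of `H`: all `ℤ`-linear combinations of characters of
finite-dimensional complex representations of `H`. -/
noncomputable def virtualCharacters (H : Type) [Group H] : Submodule ℤ (H → ℂ) :=
  Submodule.span ℤ {f : H → ℂ | ∃ V : FDRep ℂ H, f = V.character}

/-- `χ : H → ℂ` is the character of a finite-dimensional irreducible complex
representation of `H`. -/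
def IsIrreducibleCharacter (H : Type) [Group H] (χ : H → ℂ) : Prop :=
  ∃ V : FDRep ℂ H, Simple V ∧ χ = V.character

namespace Stmt9

open Module CategoryTheory.Limits

variable {K : Type} [Group K]

def subrep {V : Type} [AddCommGroup V] [Module ℂ V] (ρ : Representation ℂ K V)
    (p : Submodule ℂ V) (hp : ∀ g : K, ∀ x ∈ p, ρ g x ∈ p) : Representation ℂ K ↥p where
  toFun g := (ρ g).restrict (hp g)
  map_one' := by ext x; simp
  map_mul' g h := by ext x; simp [LinearMap.restrict_apply]

lemma hom_comm_apply {X Y : FDRep ℂ K} (f : X ⟶ Y) (g : K) (x : X) :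
    f.hom.hom.hom (X.ρ g x) = Y.ρ g (f.hom.hom.hom x) :=
  LinearMap.congr_fun (congrArg (fun φ => φ.hom.hom) (f.comm g)) x

noncomputable def inclHom (V : FDRep ℂ K) (p : Submodule ℂ ↥V)
    (hp : ∀ g : K, ∀ x ∈ p, V.ρ g x ∈ p) :
    FDRep.of (subrep V.ρ p hp) ⟶ V :=
  ⟨ObjectProperty.homMk (ModuleCat.ofHom p.subtype), fun g => by ext x; rfl⟩

lemma simple_of_irred (V : FDRep ℂ K) (hnt : Nontrivial V)
    (hirr : ∀ p : Submodule ℂ ↥V, (∀ g : K, ∀ x ∈ p, V.ρ g x ∈ p) → p = ⊥ ∨ p = ⊤) :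
    Simple V := by
  constructor
  intro Y f hmono
  constructor
  · intro hiso h0
    -- if f is iso and zero, V would be trivial
    obtain ⟨x, y, hxy⟩ := hnt
    let e' : Y ≅ V := asIso f
    have hsurj : Function.Surjective (e'.hom.hom.hom.hom : ↥Y →ₗ[ℂ] ↥V) := by
      intro v
      refine ⟨e'.inv.hom.hom.hom v, ?_⟩
      have := congrArg (fun φ => φ.hom.hom.hom) e'.inv_hom_id
      exact LinearMap.congr_fun this v
    obtain ⟨w, hw⟩ := hsurj (x - y)
    have h0' : e'.hom = 0 := h0
    rw [h0'] at hw
    have hw' : (0 : ↥Y →ₗ[ℂ] ↥V) w = x - y := hw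
    simp at hw'
    exact hxy (sub_eq_zero.mp hw'.symm)
  · intro hne
    set hl : ↥Y →ₗ[ℂ] ↥V := (f.hom.hom.hom : ↥Y →ₗ[ℂ] ↥V) with hhl
    have hinj : LinearMap.ker hl = ⊥ := by
      by_contra hker
      have hqinv : ∀ g : K, ∀ x ∈ LinearMap.ker hl, Y.ρ g x ∈ LinearMap.ker hl := by
        intro g x hx
        rw [LinearMap.mem_ker] at hx ⊢
        show f.hom.hom.hom (Y.ρ g x) = 0
        rw [hom_comm_apply]
        show V.ρ g (hl x) = 0
        rw [hx, map_zero]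
      have hcomp : inclHom Y _ hqinv ≫ f = 0 ≫ f := by
        rw [zero_comp]
        ext x
        exact x.2
      have h0' := (cancel_mono f).mp hcomp
      obtain ⟨x, hx, hx0⟩ := Submodule.exists_mem_ne_zero_of_ne_bot hker
      have := congrArg (fun φ => φ.hom.hom.hom) h0'
      have := LinearMap.congr_fun this ⟨x, hx⟩
      exact hx0 (by simpa [inclHom] using this)
    have hrinv : ∀ g : K, ∀ x ∈ LinearMap.range hl, V.ρ g x ∈ LinearMap.range hl := by
      rintro g x ⟨y, rfl⟩
      exact ⟨Y.ρ g y, (hom_comm_apply f g y)⟩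
    have hrange : LinearMap.range hl = ⊤ := by
      rcases hirr _ hrinv with h | h
      · exfalso
        apply hne
        ext x
        have : hl x ∈ LinearMap.range hl := ⟨x, rfl⟩
        rw [h, Submodule.mem_bot] at this
        exact this
      · exact h
    have hbij : Function.Bijective hl :=
      ⟨LinearMap.ker_eq_bot.mp hinj, LinearMap.range_eq_top.mp hrange⟩
    let e : ↥Y ≃ₗ[ℂ] ↥V := LinearEquiv.ofBijective hl hbij
    have hfe : ∀ z, f.hom.hom.hom z = e z := fun z => rfl
    refine ⟨⟨⟨ObjectProperty.homMk (ModuleCat.ofHom (e.symm : ↥V →ₗ[ℂ] ↥Y)), fun g => ?_⟩, ?_, ?_⟩⟩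
    · ext x
      show e.symm (V.ρ g x) = Y.ρ g (e.symm x)
      apply e.injective
      rw [e.apply_symm_apply, ← hfe, hom_comm_apply, hfe, e.apply_symm_apply]
    · ext x
      show e.symm (f.hom.hom.hom x) = x
      rw [hfe, e.symm_apply_apply]
    · ext x
      show f.hom.hom.hom (e.symm x) = x
      rw [hfe, e.apply_symm_apply]

lemma irred_of_simple (V : FDRep ℂ K) [hs : Simple V] :
    ∀ p : Submodule ℂ ↥V, (∀ g : K, ∀ x ∈ p, V.ρ g x ∈ p) → p = ⊥ ∨ p = ⊤ := by
  intro p hp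
  by_cases hb : p = ⊥
  · exact Or.inl hb
  right
  have hmono : Mono (inclHom V p hp) := by
    constructor
    intro Z g₁ g₂ h
    ext z
    have := congrArg (fun φ => φ.hom.hom.hom) h
    have := LinearMap.congr_fun this z
    exact this
  have hne : inclHom V p hp ≠ 0 := by
    obtain ⟨x, hx, hx0⟩ := Submodule.exists_mem_ne_zero_of_ne_bot hb
    intro h0
    have := LinearMap.congr_fun (congrArg (fun φ => φ.hom.hom.hom) h0) ⟨x, hx⟩
    exact hx0 (by simpa [inclHom] using this)
  have hiso : IsIso (inclHom V p hp) := isIso_of_mono_of_nonzero hne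
  -- surjectivity of the inclusion gives p = ⊤
  rw [Submodule.eq_top_iff']
  intro x
  let e' := asIso (inclHom V p hp)
  have : (inclHom V p hp).hom.hom.hom (e'.inv.hom.hom.hom x) = x := by
    have := congrArg (fun φ => φ.hom.hom.hom) e'.inv_hom_id
    exact LinearMap.congr_fun this x
  rw [← this]
  exact ((e'.inv.hom.hom.hom x : ↥p)).2

lemma nontrivial_of_simple (V : FDRep ℂ K) [hs : Simple V] : Nontrivial V := by
  rcases subsingleton_or_nontrivial ↥V with h | h
  · exfalso
    apply CategoryTheory.id_nonzero V
    ext x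
    exact @Subsingleton.elim _ h _ _
  · exact h

section Decomp

variable [Fintype K]

lemma exists_invariant_compl (V : FDRep ℂ K) (p : Submodule ℂ ↥V)
    (hp : ∀ g : K, ∀ x ∈ p, V.ρ g x ∈ p) :
    ∃ q : Submodule ℂ ↥V, (∀ g : K, ∀ x ∈ q, V.ρ g x ∈ q) ∧ IsCompl p q := by
  haveI : NeZero ((Fintype.card K : ℂ)) := ⟨by exact_mod_cast Fintype.card_ne_zero⟩
  set ρ := V.ρ with hρ
  set e := (Representation.asModuleEquiv ρ) with he
  let p' : Submodule (MonoidAlgebra ℂ K) (Representation.asModule ρ) :=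
    { carrier := {x | e x ∈ p}
      add_mem' := fun ha hb => by simp only [Set.mem_setOf_eq, map_add] at *; exact p.add_mem ha hb
      zero_mem' := by simp only [Set.mem_setOf_eq, map_zero]; exact p.zero_mem
      smul_mem' := by
        intro r x hx
        simp only [Set.mem_setOf_eq] at hx ⊢
        rw [Representation.asModuleEquiv_map_smul]
        induction r using MonoidAlgebra.induction with
        | zero => simp
        | single_add g c f _ _ ih =>
          rw [map_add, LinearMap.add_apply]
          refine p.add_mem ?_ ih
          rw [Representation.asAlgebraHom_single]
          exact p.smul_mem c (hp g _ hx) }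
  obtain ⟨q', hq'⟩ := MonoidAlgebra.Submodule.exists_isCompl p'
  have hmemq : ∀ x : ↥V, e.symm x ∈ q' ↔ x ∈ ({y : ↥V | e.symm y ∈ q'} : Set ↥V) := fun x => Iff.rfl
  let q : Submodule ℂ ↥V :=
    { carrier := {y : ↥V | e.symm y ∈ q'}
      add_mem' := fun ha hb => by
        simp only [Set.mem_setOf_eq, map_add] at *
        exact q'.add_mem ha hb
      zero_mem' := by simp only [Set.mem_setOf_eq, map_zero]; exact q'.zero_mem
      smul_mem' := by
        intro c x hx
        simp only [Set.mem_setOf_eq] at hx ⊢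
        rw [Representation.asModuleEquiv_symm_map_smul]
        exact q'.smul_mem _ hx }
  refine ⟨q, ?_, ?_⟩
  · intro g x hx
    show e.symm (ρ g x) ∈ q'
    rw [Representation.asModuleEquiv_symm_map_rho]
    exact q'.smul_mem _ hx
  · constructor
    · rw [disjoint_iff, Submodule.eq_bot_iff]
      intro x hx
      have h1 : x ∈ p := (Submodule.mem_inf.mp hx).1
      have h2 : e.symm x ∈ q' := (Submodule.mem_inf.mp hx).2
      have h1' : e.symm x ∈ p' := by
        show e (e.symm x) ∈ p
        rwa [e.apply_symm_apply]
      have := Submodule.disjoint_def.mp hq'.1 _ h1' h2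
      have : x = e (e.symm x) := (e.apply_symm_apply x).symm
      rw [this]
      rw [Submodule.disjoint_def.mp hq'.1 _ h1' h2, map_zero]
    · rw [codisjoint_iff, Submodule.eq_top_iff']
      intro x
      have : (e.symm x) ∈ p' ⊔ q' := by rw [hq'.sup_eq_top]; trivial
      obtain ⟨y, hy, z, hz, hyz⟩ := Submodule.mem_sup.mp this
      have hx : x = e y + e z := by
        rw [← map_add, hyz, e.apply_symm_apply]
      rw [hx]
      refine Submodule.mem_sup.mpr ⟨e y, hy, e z, ?_, rfl⟩
      show e.symm (e z) ∈ q'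
      rwa [e.symm_apply_apply]

lemma char_mem_span_irr (V : FDRep ℂ K) :
    V.character ∈ Submodule.span ℤ {χ : K → ℂ | IsIrreducibleCharacter K χ} := by
  suffices H : ∀ (n : ℕ) (V : FDRep ℂ K), finrank ℂ V = n →
      V.character ∈ Submodule.span ℤ {χ : K → ℂ | IsIrreducibleCharacter K χ} from H _ V rfl
  intro n
  induction n using Nat.strong_induction_on with
  | _ n ih =>
    intro V hn
    by_cases hs : Simple V
    · exact Submodule.subset_span ⟨V, hs, rfl⟩
    rcases Nat.eq_zero_or_pos n with h0 | hpos
    · subst h0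
      have hss : Subsingleton ↥V := Module.finrank_zero_iff.mp hn
      have : V.character = 0 := by
        funext g
        show LinearMap.trace ℂ ↥V (V.ρ g) = 0
        have : V.ρ g = 0 := Subsingleton.elim _ _
        rw [this, map_zero]
      rw [this]
      exact Submodule.zero_mem _
    · have hnt : Nontrivial ↥V := Module.nontrivial_of_finrank_pos (hn ▸ hpos)
      obtain ⟨p, hpinv, hpbt⟩ : ∃ p : Submodule ℂ ↥V,
          (∀ g : K, ∀ x ∈ p, V.ρ g x ∈ p) ∧ ¬(p = ⊥ ∨ p = ⊤) := by
        by_contra hall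
        push_neg at hall
        exact hs (simple_of_irred V hnt hall)
      push_neg at hpbt
      obtain ⟨hpb, hpt⟩ := hpbt
      obtain ⟨q, hqinv, hcompl⟩ := exists_invariant_compl V p hpinv
      have hqt : q ≠ ⊤ := by
        intro h
        apply hpb
        have := hcompl.inf_eq_bot
        rw [h, inf_top_eq] at this
        exact this
      -- characters add over the direct sum decomposition
      have hint : DirectSum.IsInternal (fun b : Bool => cond b p q) :=
        (DirectSum.isInternal_submodule_iff_isCompl _ (i := true) (j := false)
          (by simp) (by ext b; cases b <;> simp)).mpr hcompl
      have hchar : V.character = (FDRep.of (subrep V.ρ p hpinv)).character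
            + (FDRep.of (subrep V.ρ q hqinv)).character := by
        funext g
        have hmaps : ∀ b : Bool, Set.MapsTo ⇑(V.ρ g) ↑(bif b then p else q) ↑(bif b then p else q) := by
          intro b
          cases b
          · exact fun x hx => hqinv g x hx
          · exact fun x hx => hpinv g x hx
        have := LinearMap.trace_eq_sum_trace_restrict hint hmaps
        rw [Fintype.sum_bool] at this
        exact this
      rw [hchar]
      have hfr : finrank ℂ ↥p + finrank ℂ ↥q = n := by
        rw [← hn]
        exact Submodule.finrank_add_eq_of_isCompl hcompl
      have h1 : finrank ℂ ↥p < n := hn ▸ Submodule.finrank_lt hpt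
      have h2 : finrank ℂ ↥q < n := hn ▸ Submodule.finrank_lt hqt
      exact Submodule.add_mem _ (ih _ h1 _ rfl) (ih _ h2 _ rfl)
end Decomp

section Conj

/-- Pullback of a representation along a group automorphism preserves simplicity. -/
lemma simple_comp (V : FDRep ℂ K) (hV : Simple V) (φ : K ≃* K) :
    Simple (FDRep.of (V.ρ.comp (φ : K →* K))) := by
  haveI := hV
  have hnt : Nontrivial ↥V := nontrivial_of_simple V
  apply simple_of_irred
  · exact hnt
  · intro p hp
    refine irred_of_simple V p (fun g x hx => ?_)
    have h2 : V.ρ (φ (φ.symm g)) x ∈ p := hp (φ.symm g) x hx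
    rwa [MulEquiv.apply_symm_apply] at h2

lemma char_comp (V : FDRep ℂ K) (φ : K →* K) (g : K) :
    (FDRep.of (V.ρ.comp φ)).character g = V.character (φ g) := rfl

end Conj

section Pairing

variable [Fintype K]

lemma pairing_irr (χ ψ : K → ℂ)
    (hχ : IsIrreducibleCharacter K χ) (hψ : IsIrreducibleCharacter K ψ) :
    ∑ h : K, χ h * ψ h⁻¹ = if χ = ψ then (Fintype.card K : ℂ) else 0 := by
  classical
  obtain ⟨V, hV, rfl⟩ := hχ
  obtain ⟨W, hW, rfl⟩ := hψ
  haveI := hV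
  haveI := hW
  have hc0 : (Fintype.card K : ℂ) ≠ 0 := by exact_mod_cast Fintype.card_ne_zero
  haveI : Invertible (Fintype.card K : ℂ) := invertibleOfNonzero hc0
  haveI : Invertible (Nat.card K : ℂ) := by rw [Nat.card_eq_fintype_card]; exact invertibleOfNonzero hc0
  have h0 := FDRep.char_orthonormal (k := ℂ) (G := K) V W
  rw [Nat.card_eq_fintype_card] at h0
  have h : (Fintype.card K : ℂ)⁻¹ • ∑ g : K, V.character g * W.character g⁻¹
      = if Nonempty (V ≅ W) then 1 else 0 := by rw [smul_eq_mul]; exact_mod_cast h0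
  by_cases heq : V.character = W.character
  · rw [if_pos heq]
    have hiso : Nonempty (V ≅ W) := by
      by_contra hno
      rw [if_neg hno] at h
      have h20 := FDRep.char_orthonormal (k := ℂ) (G := K) W W
      rw [Nat.card_eq_fintype_card] at h20
      have h2 : (Fintype.card K : ℂ)⁻¹ • ∑ g : K, V.character g * W.character g⁻¹
          = if Nonempty (W ≅ W) then 1 else 0 := by
        rw [heq, smul_eq_mul]; exact_mod_cast h20
      rw [if_pos ⟨Iso.refl W⟩] at h2
      exact zero_ne_one (h.symm.trans h2)
    rw [if_pos hiso] at h
    have h' : (Fintype.card K : ℂ)⁻¹ * ∑ g : K, V.character g * W.character g⁻¹ = 1 := by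
      simpa [smul_eq_mul] using h
    calc ∑ g : K, V.character g * W.character g⁻¹
        = (Fintype.card K : ℂ) * ((Fintype.card K : ℂ)⁻¹
            * ∑ g : K, V.character g * W.character g⁻¹) := by
          field_simp
      _ = (Fintype.card K : ℂ) := by rw [h', mul_one]
  · rw [if_neg heq]
    have hno : ¬ Nonempty (V ≅ W) := fun ⟨i⟩ => heq (FDRep.char_iso i)
    rw [if_neg hno] at h
    have h' : (Fintype.card K : ℂ)⁻¹ * ∑ g : K, V.character g * W.character g⁻¹ = 0 := by
      simpa [smul_eq_mul] using h
    exact (mul_eq_zero.mp h').resolve_left (inv_ne_zero hc0)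

end Pairing

section PairL

variable [Fintype K]

noncomputable def pairL (w : K → ℂ) : (K → ℂ) →ₗ[ℤ] ℂ where
  toFun f := ∑ h, f h * w h⁻¹
  map_add' f g := by simp [add_mul, Finset.sum_add_distrib]
  map_smul' c f := by
    simp only [Pi.smul_apply, smul_mul_assoc, RingHom.id_apply, ← Finset.smul_sum]

lemma pairL_apply (w f : K → ℂ) : pairL w f = ∑ h, f h * w h⁻¹ := rfl

end PairL

end Stmt9

section SubgroupLemmas

open Stmt9

variable {G : Type} [Group G] (H : Subgroup G) [H.Normal] (b : G)

lemma conjFun_eq_comp (χ : ↥H → ℂ) :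
    conjFun H b χ = χ ∘ ⇑(MulAut.conjNormal b⁻¹ : MulAut ↥H) := by
  funext h
  exact congrArg χ (Subtype.ext (by simp))

lemma conjFun_injective : Function.Injective (conjFun H b) := by
  intro χ χ' hcc
  rw [conjFun_eq_comp, conjFun_eq_comp] at hcc
  funext h
  have := congrFun hcc ((MulAut.conjNormal b⁻¹ : MulAut ↥H).symm h)
  simpa using this

lemma conj_irr (χ : ↥H → ℂ) (h : IsIrreducibleCharacter ↥H χ) :
    IsIrreducibleCharacter ↥H (conjFun H b χ) := by
  obtain ⟨V, hV, rfl⟩ := h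
  refine ⟨FDRep.of (V.ρ.comp ((MulAut.conjNormal b⁻¹ : MulAut ↥H) : ↥H →* ↥H)),
    simple_comp V hV _, ?_⟩
  rw [conjFun_eq_comp]
  funext h
  exact (char_comp V ((MulAut.conjNormal b⁻¹ : MulAut ↥H) : ↥H →* ↥H) h).symm

lemma conj_conj_char (hidx : H.index = 2) (V : FDRep ℂ ↥H) :
    conjFun H b (conjFun H b V.character) = V.character := by
  funext h
  have hd : b * b ∈ H := Subgroup.mul_self_mem_of_index_two hidx b
  set d : ↥H := ⟨b * b, hd⟩ with hdd
  have pf1 : b⁻¹ * ↑h * b ∈ H := Subgroup.Normal.conj_mem' inferInstance ↑h h.2 b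
  have pf2 : b⁻¹ * ((⟨b⁻¹ * ↑h * b, pf1⟩ : ↥H) : G) * b ∈ H :=
    Subgroup.Normal.conj_mem' inferInstance _ pf1 b
  have he : (⟨b⁻¹ * ((⟨b⁻¹ * ↑h * b, pf1⟩ : ↥H) : G) * b, pf2⟩ : ↥H) = d⁻¹ * h * d⁻¹⁻¹ :=
    Subtype.ext (by push_cast [hdd]; simp [mul_assoc, mul_inv_rev])
  exact (congrArg V.character he).trans (FDRep.char_conj V (h : ↥H) d⁻¹)

end SubgroupLemmas

/-- Let `G` be a finite group, `H` a normal subgroup of index 2, and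
`b ∈ G \ H`.  Let `M` be the set of class functions on `H` of the form `χ − ᵇχ`, where
`χ` ranges over all virtual characters of `H`.  Then `M` is a free abelian group with
`ℤ`-basis the functions `χ − ᵇχ`, where `χ` ranges over a set `T` of representatives of
the two-element `G`-orbits in the set of irreducible characters of `H`: the family
`(χ − ᵇχ)_{χ ∈ T}` is `ℤ`-linearly independent and `M` is its `ℤ`-span. -/
theorem virtual_character_sub_conj_free_basis
    {G : Type} [Group G] [Finite G] (H : Subgroup G) [H.Normal] (hidx : H.index = 2)
    (b : G) (hb : b ∉ H)
    (T : Set (↥H → ℂ))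
    (hTirr : ∀ χ ∈ T, IsIrreducibleCharacter ↥H χ)
    (hTmoved : ∀ χ ∈ T, conjFun H b χ ≠ χ)
    (hTorbits : ∀ χ ∈ T, ∀ χ' ∈ T, χ ≠ χ' → χ' ≠ conjFun H b χ)
    (hTcomplete : ∀ ψ : ↥H → ℂ, IsIrreducibleCharacter ↥H ψ → conjFun H b ψ ≠ ψ →
      ψ ∈ T ∨ conjFun H b ψ ∈ T) :
    LinearIndependent ℤ (fun χ : T => (χ : ↥H → ℂ) - conjFun H b χ) ∧
    {f : ↥H → ℂ | ∃ χ ∈ virtualCharacters ↥H, f = χ - conjFun H b χ} =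
      ↑(Submodule.span ℤ {f : ↥H → ℂ | ∃ χ ∈ T, f = χ - conjFun H b χ}) := by
  classical
  haveI : Fintype ↥H := Fintype.ofFinite _
  have hc0 : (Fintype.card ↥H : ℂ) ≠ 0 := by exact_mod_cast Fintype.card_ne_zero
  have h2c0 : 2 * (Fintype.card ↥H : ℂ) ≠ 0 := mul_ne_zero two_ne_zero hc0
  -- the pairing of two basis differences
  have hpair : ∀ χ ∈ T, ∀ χ' ∈ T,
      Stmt9.pairL (χ' - conjFun H b χ') (χ - conjFun H b χ)
        = if χ = χ' then 2 * (Fintype.card ↥H : ℂ) else 0 := by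
    intro χ hχ χ' hχ'
    have hχi := hTirr χ hχ
    have hχi' := hTirr χ' hχ'
    have hcχi := conj_irr H b χ hχi
    have hcχi' := conj_irr H b χ' hχi'
    have hexp : Stmt9.pairL (χ' - conjFun H b χ') (χ - conjFun H b χ)
        = (∑ h : ↥H, χ h * χ' h⁻¹) - (∑ h : ↥H, χ h * conjFun H b χ' h⁻¹)
          - (∑ h : ↥H, conjFun H b χ h * χ' h⁻¹)
          + (∑ h : ↥H, conjFun H b χ h * conjFun H b χ' h⁻¹) := by
      rw [Stmt9.pairL_apply]
      rw [Finset.sum_congr rfl (fun h _ => by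
        show (χ - conjFun H b χ) h * (χ' - conjFun H b χ') h⁻¹
          = χ h * χ' h⁻¹ - χ h * conjFun H b χ' h⁻¹ - conjFun H b χ h * χ' h⁻¹
            + conjFun H b χ h * conjFun H b χ' h⁻¹
        simp only [Pi.sub_apply]
        ring)]
      rw [Finset.sum_add_distrib, Finset.sum_sub_distrib, Finset.sum_sub_distrib]
    rw [hexp, Stmt9.pairing_irr χ χ' hχi hχi', Stmt9.pairing_irr χ _ hχi hcχi',
      Stmt9.pairing_irr _ χ' hcχi hχi', Stmt9.pairing_irr _ _ hcχi hcχi']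
    by_cases heq : χ = χ'
    · subst heq
      rw [if_pos rfl]
      rw [if_pos rfl, if_neg (fun hcon => hTmoved χ hχ hcon.symm),
        if_neg (fun hcon => hTmoved χ hχ hcon), if_pos rfl]
      ring
    · rw [if_neg heq]
      rw [if_neg heq,
        if_neg (fun hcon => (hTorbits χ' hχ' χ hχ (fun hh => heq hh.symm)) hcon),
        if_neg (fun hcon => (hTorbits χ hχ χ' hχ' heq) hcon.symm),
        if_neg (fun hcon => heq ((conjFun_injective H b) hcon))]
      ring
  -- the linear map D
  set σ : MulAut ↥H := MulAut.conjNormal b⁻¹ with hσ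
  set D : ((↥H → ℂ) →ₗ[ℤ] (↥H → ℂ)) := LinearMap.id - LinearMap.funLeft ℤ ℂ ⇑σ with hDdef
  have hD : ∀ x : ↥H → ℂ, D x = x - conjFun H b x := by
    intro x
    rw [hDdef]
    simp only [LinearMap.sub_apply, LinearMap.id_apply]
    rw [conjFun_eq_comp]
    rfl
  constructor
  · -- linear independence
    rw [linearIndependent_iff']
    intro s g hsum i hi
    have happ := congrArg (Stmt9.pairL ((i : ↥H → ℂ) - conjFun H b (i : ↥H → ℂ))) hsum
    rw [map_sum, map_zero] at happ
    rw [Finset.sum_congr rfl (fun j hj => by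
      rw [map_smul, hpair _ j.2 _ i.2])] at happ
    -- now the sum is of g j • ite (↑j = ↑i)
    have hsum2 : ∑ j ∈ s, g j • (if (j : ↥H → ℂ) = (i : ↥H → ℂ)
        then 2 * (Fintype.card ↥H : ℂ) else 0) = g i • (2 * (Fintype.card ↥H : ℂ)) := by
      rw [Finset.sum_eq_single_of_mem i hi]
      · rw [if_pos rfl]
      · intro j _ hji
        rw [if_neg (fun hcon => hji (Subtype.ext hcon)), smul_zero]
    rw [hsum2] at happ
    have : ((g i : ℤ) : ℂ) * (2 * (Fintype.card ↥H : ℂ)) = 0 := by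
      rw [← zsmul_eq_mul]; exact happ
    have := (mul_eq_zero.mp this).resolve_right h2c0
    exact_mod_cast this
  · -- span equality
    ext f
    simp only [Set.mem_setOf_eq, SetLike.mem_coe]
    constructor
    · rintro ⟨χ, hχ, rfl⟩
      have hle : virtualCharacters ↥H ≤ Submodule.span ℤ {χ : ↥H → ℂ | IsIrreducibleCharacter ↥H χ} := by
        rw [virtualCharacters, Submodule.span_le]
        rintro f' ⟨V, rfl⟩
        exact Stmt9.char_mem_span_irr V
      have hspan := hle hχ
      rw [show χ - conjFun H b χ = D χ from (hD χ).symm]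
      clear hχ
      induction hspan using Submodule.span_induction with
      | mem ψ hψ =>
        by_cases hfix : conjFun H b ψ = ψ
        · rw [hD, hfix, sub_self]
          exact zero_mem _
        · rcases hTcomplete ψ hψ hfix with hT | hT
          · exact Submodule.subset_span ⟨ψ, hT, hD ψ⟩
          · have hinv2 : conjFun H b (conjFun H b ψ) = ψ := by
              obtain ⟨V, hV, rfl⟩ := hψ
              exact conj_conj_char H b hidx V
            have hneg : D ψ = -((conjFun H b ψ) - conjFun H b (conjFun H b ψ)) := by
              rw [hD, hinv2, neg_sub]
            rw [hneg]
            exact neg_mem (Submodule.subset_span ⟨conjFun H b ψ, hT, rfl⟩)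
      | zero => rw [map_zero]; exact zero_mem _
      | add x y hx hy ihx ihy => rw [map_add]; exact add_mem ihx ihy
      | smul c x hx ihx => rw [map_smul]; exact Submodule.smul_mem _ _ ihx
    · intro hf
      have hle : Submodule.span ℤ {f : ↥H → ℂ | ∃ χ ∈ T, f = χ - conjFun H b χ}
          ≤ Submodule.map D (virtualCharacters ↥H) := by
        rw [Submodule.span_le]
        rintro f' ⟨χ, hχT, rfl⟩
        obtain ⟨V, hV, hVχ⟩ := hTirr χ hχT
        refine ⟨χ, ?_, hD χ⟩
        rw [hVχ]
        exact Submodule.subset_span ⟨V, rfl⟩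
      obtain ⟨χ, hχ, hχeq⟩ := Submodule.mem_map.mp (hle hf)
      exact ⟨χ, hχ, by rw [← hχeq, hD]⟩
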